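/- Let N ≥ 4, let f_1,...,f_{N−1} be commuting indeterminates, β_1,...,β_{N−2} real constants, and λ a parameter. Define F_m(λ) = ∏_{n=m}^{N−2} (1 + (λ + β_n) ∂²/∂f_n ∂f_{n+1}) applied to f_m f_{m+1} ⋯ f_{N−1}, for 1 ≤ m ≤ N−2, and F_{N−1}(λ) = f_{N−1}. Then F_m(λ) equals the determinant of the (N−m)×(N−m) tridiagonal matrix whose diagonal entries are f_m, f_{m+1}, ..., f_{N−1}, whose entries on the first superdiagonal are all 1, and whose entries on the first subdiagonal are −λ−β_m, −λ−β_{m+1}, ..., −λ−β_{N−2}. -/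

import Mathlib

/-- The Veselov–Shabat operator 1 + (λ + β_n) ∂²/∂f_n ∂f_{n+1} on the polynomial ring
in the variables f_1, f_2, … over ℝ[λ]. -/
noncomputable def vsOp (β : ℕ → ℝ) (n : ℕ) (p : MvPolynomial ℕ (Polynomial ℝ)) :
    MvPolynomial ℕ (Polynomial ℝ) :=
  p + MvPolynomial.C (Polynomial.X + Polynomial.C (β n)) *
      MvPolynomial.pderiv n (MvPolynomial.pderiv (n + 1) p)

/-- F_m(λ) = ∏_{n=m}^{N−2} (1 + (λ + β_n) ∂²/∂f_n ∂f_{n+1}) (f_m f_{m+1} ⋯ f_{N−1});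
for m = N−1 this is just f_{N−1}. -/
noncomputable def vsF (β : ℕ → ℝ) (N m : ℕ) : MvPolynomial ℕ (Polynomial ℝ) :=
  (List.range' m (N - 1 - m)).foldr (vsOp β)
    (∏ n ∈ Finset.Icc m (N - 1), MvPolynomial.X n)

open MvPolynomial

/-- The tridiagonal matrix from the statement. -/
noncomputable def triMat (β : ℕ → ℝ) (m k : ℕ) :
    Matrix (Fin k) (Fin k) (MvPolynomial ℕ (Polynomial ℝ)) :=
  Matrix.of fun i j : Fin k =>
    if (i : ℕ) = (j : ℕ) then MvPolynomial.X (m + (i : ℕ))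
    else if (j : ℕ) = (i : ℕ) + 1 then 1
    else if (i : ℕ) = (j : ℕ) + 1 then
      -(MvPolynomial.C (Polynomial.X + Polynomial.C (β (m + (j : ℕ)))))
    else 0

lemma vs_pderiv_comm (i j : ℕ) (p : MvPolynomial ℕ (Polynomial ℝ)) :
    pderiv i (pderiv j p) = pderiv j (pderiv i p) := by
  induction p using MvPolynomial.induction_on' with
  | add p q hp hq => simp [hp, hq]
  | monomial s a =>
    rcases eq_or_ne i j with rfl | h
    · rfl
    · simp only [pderiv_monomial, Finsupp.tsub_apply, Finsupp.single_apply,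
        if_neg h, if_neg (Ne.symm h), Nat.sub_zero]
      rw [tsub_right_comm]
      congr 1
      ring

lemma vs_pderiv_vsOp (β : ℕ → ℝ) (j n : ℕ) (p : MvPolynomial ℕ (Polynomial ℝ)) :
    pderiv j (vsOp β n p) = vsOp β n (pderiv j p) := by
  unfold vsOp
  rw [map_add, pderiv_C_mul, vs_pderiv_comm j n, vs_pderiv_comm j (n+1)]

lemma vs_pderiv_foldr (β : ℕ → ℝ) (j : ℕ) (l : List ℕ) (p : MvPolynomial ℕ (Polynomial ℝ)) :
    pderiv j (l.foldr (vsOp β) p) = l.foldr (vsOp β) (pderiv j p) := by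
  induction l with
  | nil => rfl
  | cons n t ih => simp [List.foldr_cons, vs_pderiv_vsOp, ih]

lemma vs_foldr_zero (β : ℕ → ℝ) (l : List ℕ) :
    l.foldr (vsOp β) 0 = 0 := by
  induction l with
  | nil => rfl
  | cons n t ih => simp [List.foldr_cons, ih, vsOp]

lemma vs_pderiv_prod_X (j : ℕ) (s : Finset ℕ) (h : j ∉ s) :
    pderiv j (∏ n ∈ s, (X n : MvPolynomial ℕ (Polynomial ℝ))) = 0 := by
  induction s using Finset.induction_on with
  | empty => simp
  | @insert n s' hns ih =>
    rw [Finset.prod_insert hns, pderiv_mul,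
      pderiv_X_of_ne (by rintro rfl; exact h (Finset.mem_insert_self _ _)),
      ih (fun hj => h (Finset.mem_insert_of_mem hj))]
    simp

lemma vs_pderiv_vsF (β : ℕ → ℝ) (N m j : ℕ) (h : j < m) :
    pderiv j (vsF β N m) = 0 := by
  unfold vsF
  rw [vs_pderiv_foldr, vs_pderiv_prod_X _ _ (by intro hmem; rw [Finset.mem_Icc] at hmem; omega),
    vs_foldr_zero]

lemma vs_vsOp_X_mul (β : ℕ → ℝ) (n j : ℕ) (h1 : j ≠ n) (h2 : j ≠ n + 1)
    (p : MvPolynomial ℕ (Polynomial ℝ)) :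
    vsOp β n (X j * p) = X j * vsOp β n p := by
  unfold vsOp
  rw [pderiv_mul, pderiv_X_of_ne h2, zero_mul, zero_add,
    pderiv_mul, pderiv_X_of_ne h1, zero_mul, zero_add]
  ring

lemma vs_foldr_X_mul (β : ℕ → ℝ) (m : ℕ) (l : List ℕ) (h : ∀ n ∈ l, m < n)
    (p : MvPolynomial ℕ (Polynomial ℝ)) :
    l.foldr (vsOp β) (X m * p) = X m * l.foldr (vsOp β) p := by
  induction l with
  | nil => rfl
  | cons n t ih =>
    have hn := h n List.mem_cons_self
    rw [List.foldr_cons, List.foldr_cons, ih (fun x hx => h x (List.mem_cons_of_mem _ hx)),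
      vs_vsOp_X_mul β n m (by omega) (by omega)]

lemma vs_vsF_head (β : ℕ → ℝ) (N m : ℕ) (h : m + 1 ≤ N - 1) :
    vsF β N m = vsOp β m (X m * vsF β N (m + 1)) := by
  unfold vsF
  have h1 : N - 1 - m = (N - 1 - (m + 1)) + 1 := by omega
  have h2 : Finset.Icc m (N - 1) = insert m (Finset.Icc (m + 1) (N - 1)) := by
    ext x; simp [Finset.mem_Icc, Finset.mem_insert]; omega
  rw [h1, List.range'_succ, List.foldr_cons, h2,
    Finset.prod_insert (by intro hmem; rw [Finset.mem_Icc] at hmem; omega),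
    vs_foldr_X_mul β m _ (fun n hn => by
      rw [List.mem_range'] at hn; omega)]

lemma vs_vsF_step (β : ℕ → ℝ) (N m : ℕ) (h : m + 1 ≤ N - 1) :
    vsF β N m = X m * vsF β N (m + 1)
      + C (Polynomial.X + Polynomial.C (β m)) * pderiv (m + 1) (vsF β N (m + 1)) := by
  rw [vs_vsF_head β N m h]
  unfold vsOp
  refine congrArg₂ (· + ·) rfl (congrArg₂ (· * ·) rfl ?_)
  rw [pderiv_mul, pderiv_X_of_ne (by omega), zero_mul, zero_add,
    pderiv_mul, pderiv_X_self, one_mul,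
    vs_pderiv_comm, vs_pderiv_vsF β N (m+1) m (by omega)]
  simp

lemma vs_vsF_last (β : ℕ → ℝ) (N : ℕ) (hN : 1 ≤ N) : vsF β N N = 1 := by
  unfold vsF
  rw [show N - 1 - N = 0 from by omega, List.range'_zero, List.foldr_nil,
    Finset.Icc_eq_empty (by omega), Finset.prod_empty]

lemma vs_vsF_pred (β : ℕ → ℝ) (N : ℕ) (hN : 1 ≤ N) : vsF β N (N - 1) = X (N - 1) := by
  unfold vsF
  rw [show N - 1 - (N - 1) = 0 from by omega, List.range'_zero, List.foldr_nil,
    Finset.Icc_self, Finset.prod_singleton]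

lemma vs_pderiv_vsF_self (β : ℕ → ℝ) (N m : ℕ) (hN : 1 ≤ N) (h : m ≤ N - 1) :
    pderiv m (vsF β N m) = vsF β N (m + 1) := by
  rcases lt_or_eq_of_le h with h' | h'
  · rw [vs_vsF_step β N m (by omega), map_add, pderiv_mul, pderiv_X_self, one_mul,
      vs_pderiv_vsF β N (m+1) m (by omega), mul_zero, add_zero,
      pderiv_C_mul, vs_pderiv_comm, vs_pderiv_vsF β N (m+1) m (by omega)]
    simp
  · subst h'
    rw [vs_vsF_pred β N hN, pderiv_X_self,
      show N - 1 + 1 = N from by omega, vs_vsF_last β N hN]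

lemma vs_vsF_rec (β : ℕ → ℝ) (N m : ℕ) (h : m + 2 ≤ N) :
    vsF β N m = X m * vsF β N (m + 1)
      + C (Polynomial.X + Polynomial.C (β m)) * vsF β N (m + 2) := by
  rw [vs_vsF_step β N m (by omega), vs_pderiv_vsF_self β N (m+1) (by omega) (by omega)]

lemma triMat_succ_succ (β : ℕ → ℝ) (m k : ℕ) :
    (triMat β m (k + 1)).submatrix Fin.succ Fin.succ = triMat β (m + 1) k := by
  ext i j
  simp only [Matrix.submatrix_apply, triMat, Matrix.of_apply, Fin.val_succ,
    show m + ((i : ℕ) + 1) = m + 1 + (i : ℕ) from by omega,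
    show m + ((j : ℕ) + 1) = m + 1 + (j : ℕ) from by omega]
  split_ifs <;> first | rfl | omega

lemma triMat_det_rec (β : ℕ → ℝ) (m k : ℕ) :
    (triMat β m (k + 2)).det
      = X m * (triMat β (m + 1) (k + 1)).det
        + C (Polynomial.X + Polynomial.C (β m)) * (triMat β (m + 2) k).det := by
  rw [Matrix.det_succ_column_zero, Fin.sum_univ_succ, Fin.sum_univ_succ]
  have hzero : ∀ t : Fin k,
      (triMat β m (k + 2)) (Fin.succ (Fin.succ t)) 0 = 0 := by
    intro t
    simp only [triMat, Matrix.of_apply, Fin.val_succ, Fin.val_zero]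
    split_ifs <;> first | omega | rfl | contradiction
  have htail : (∑ t : Fin k, (-1 : MvPolynomial ℕ (Polynomial ℝ)) ^
      ((Fin.succ (Fin.succ t) : Fin (k + 2)) : ℕ) *
      (triMat β m (k + 2)) (Fin.succ (Fin.succ t)) 0 *
      ((triMat β m (k + 2)).submatrix (Fin.succ (Fin.succ t)).succAbove Fin.succ).det) = 0 := by
    apply Finset.sum_eq_zero
    intro t _
    rw [hzero t]; ring
  rw [htail, add_zero]
  -- first term
  have h00 : (triMat β m (k + 2)) 0 0 = X m := by
    simp [triMat]
  have h10 : (triMat β m (k + 2)) (Fin.succ 0) 0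
      = -(C (Polynomial.X + Polynomial.C (β m))) := by
    simp only [triMat, Matrix.of_apply, Fin.val_succ, Fin.val_zero]
    norm_num
  -- second term
  have hB : ((triMat β m (k + 2)).submatrix (Fin.succ 0 : Fin (k + 2)).succAbove Fin.succ).det
      = (triMat β (m + 2) k).det := by
    rw [Matrix.det_succ_row_zero, Fin.sum_univ_succ]
    have hrow0 : ∀ j : Fin k,
        ((triMat β m (k + 2)).submatrix (Fin.succ 0 : Fin (k + 2)).succAbove Fin.succ)
          0 (Fin.succ j) = 0 := by
      intro j
      simp only [Matrix.submatrix_apply, Fin.succ_succAbove_zero]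
      simp only [triMat, Matrix.of_apply, Fin.val_succ, Fin.val_zero]
      split_ifs <;> first | omega | rfl | contradiction
    have htail2 : (∑ j : Fin k, (-1 : MvPolynomial ℕ (Polynomial ℝ)) ^
        ((Fin.succ j : Fin (k + 1)) : ℕ) *
        ((triMat β m (k + 2)).submatrix (Fin.succ 0 : Fin (k + 2)).succAbove Fin.succ) 0
          (Fin.succ j) *
        (((triMat β m (k + 2)).submatrix (Fin.succ 0 : Fin (k + 2)).succAbove
            Fin.succ).submatrix Fin.succ (Fin.succ j).succAbove).det) = 0 := by
      apply Finset.sum_eq_zero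
      intro j _
      rw [hrow0 j]; ring
    rw [htail2, add_zero]
    have hent : ((triMat β m (k + 2)).submatrix (Fin.succ 0 : Fin (k + 2)).succAbove Fin.succ)
        0 0 = 1 := by
      simp only [Matrix.submatrix_apply, Fin.succ_succAbove_zero]
      simp only [triMat, Matrix.of_apply, Fin.val_succ, Fin.val_zero]
      norm_num
    rw [hent, Fin.succAbove_zero, Matrix.submatrix_submatrix]
    have hmaps : (triMat β m (k + 2)).submatrix
        ((Fin.succ 0 : Fin (k + 2)).succAbove ∘ Fin.succ) (Fin.succ ∘ Fin.succ)
        = triMat β (m + 2) k := by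
      have hrm : ((Fin.succ 0 : Fin (k + 2)).succAbove ∘ Fin.succ)
          = (Fin.succ ∘ Fin.succ : Fin k → Fin (k + 2)) := by
        funext i
        simp [Function.comp, Fin.succ_succAbove_succ]
      rw [hrm, ← Matrix.submatrix_submatrix, triMat_succ_succ, triMat_succ_succ]
    rw [hmaps]
    simp
  rw [h00, h10, Fin.succAbove_zero,
    show ((triMat β m (k + 2)).submatrix Fin.succ Fin.succ) = triMat β (m + 1) (k + 1) from
      triMat_succ_succ β m (k + 1), hB]
  simp only [Fin.val_succ, Fin.val_zero, pow_one, pow_zero]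
  ring

lemma vs_main (β : ℕ → ℝ) (N : ℕ) (hN : 1 ≤ N) :
    ∀ k m : ℕ, m + k = N → vsF β N m = (triMat β m k).det := by
  intro k
  induction k using Nat.strong_induction_on with
  | _ k ih =>
    intro m hm
    match k, hm with
    | 0, hm =>
      rw [show m = N from by omega, vs_vsF_last β N hN, Matrix.det_fin_zero]
    | 1, hm =>
      rw [show m = N - 1 from by omega, vs_vsF_pred β N hN, Matrix.det_fin_one]
      simp [triMat]
    | (k + 2), hm =>
      rw [vs_vsF_rec β N m (by omega), triMat_det_rec,
        ih (k + 1) (by omega) (m + 1) (by omega), ih k (by omega) (m + 2) (by omega)]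

/-- F_m(λ) equals the determinant of the (N−m)×(N−m) tridiagonal matrix
with diagonal f_m, …, f_{N−1}, superdiagonal entries 1 and subdiagonal entries
−λ−β_m, …, −λ−β_{N−2}. -/
theorem vsF_determinant_formula (N : ℕ) (hN : 4 ≤ N) (β : ℕ → ℝ) :
    ∀ m : ℕ, 1 ≤ m → m ≤ N - 1 →
      vsF β N m
        = Matrix.det (Matrix.of fun i j : Fin (N - m) =>
            if (i : ℕ) = (j : ℕ) then MvPolynomial.X (m + (i : ℕ))
            else if (j : ℕ) = (i : ℕ) + 1 then 1
            else if (i : ℕ) = (j : ℕ) + 1 then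
              -(MvPolynomial.C (Polynomial.X + Polynomial.C (β (m + (j : ℕ)))))
            else 0) := by
  intro m h1 h2
  exact vs_main β N (by omega) (N - m) m (by omega)
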